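/- Key cancellation and elliptic estimates for the singular part of the stream function: let α∈(0,1] and let f:(0,∞)→ℝ be continuous and compactly supported in (0,∞); let ψ(R) = (1/(4α)) ∫_R^∞ f(s)/s ds + (1/(4α)) R^{−4/α} ∫₀^R s^{4/α−1} f(s) ds. Then (i) ψ'(R) = −(1/α²) R^{−4/α−1} ∫₀^R s^{4/α−1} f(s) ds (the derivatives of the two summands cancel at leading order), and (ii) there is an absolute constant C>0, independent of α, such that α‖Rψ'‖_{L²(0,∞)} ≤ C‖f‖_{L²(0,∞)} and α²‖R²ψ''‖_{L²(0,∞)} ≤ C‖f‖_{L²(0,∞)}. -/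

import Mathlib

open MeasureTheory Set Real
open scoped ENNReal

noncomputable section

/-- the explicit radial stream function
`ψ(R) = (1/(4α)) ∫_R^∞ f(s)/s ds + (1/(4α)) R^{−4/α} ∫₀^R s^{4/α−1} f(s) ds` -/
def psiExp (α : ℝ) (f : ℝ → ℝ) (R : ℝ) : ℝ :=
  (1 / (4 * α)) * (∫ s in Ioi R, f s / s)
    + (1 / (4 * α)) * R ^ (-(4 / α)) * ∫ s in Ioc (0:ℝ) R, s ^ (4 / α - 1) * f s

lemma exists_eps {f : ℝ → ℝ} (hf2 : HasCompactSupport f) (hf3 : tsupport f ⊆ Ioi 0) :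
    ∃ ε > 0, ∀ s : ℝ, s < ε → f s = 0 := by
  by_cases h : (tsupport f).Nonempty
  · refine ⟨sInf (tsupport f), hf3 (hf2.isCompact.sInf_mem h), fun s hs => ?_⟩
    apply image_eq_zero_of_notMem_tsupport
    exact fun hmem => absurd (csInf_le hf2.isCompact.bddBelow hmem) (not_le.mpr hs)
  · exact ⟨1, one_pos, fun s _ => image_eq_zero_of_notMem_tsupport
      (by simp [not_nonempty_iff_eq_empty.mp h])⟩

lemma cont_rpow_mul {f : ℝ → ℝ} (hf1 : Continuous f) (hf2 : HasCompactSupport f)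
    (hf3 : tsupport f ⊆ Ioi 0) (c : ℝ) : Continuous fun s : ℝ => s ^ c * f s := by
  obtain ⟨ε, hε, h0⟩ := exists_eps hf2 hf3
  rw [continuous_iff_continuousAt]
  intro x
  rcases lt_or_ge x ε with hx | hx
  · have : (fun s : ℝ => s ^ c * f s) =ᶠ[nhds x] fun _ => 0 := by
      filter_upwards [Iio_mem_nhds hx] with s hs
      simp [h0 s hs]
    exact this.continuousAt
  · have hx0 : x ≠ 0 := ne_of_gt (lt_of_lt_of_le hε hx)
    exact ((Real.continuousAt_rpow_const x c (Or.inl hx0)).mul hf1.continuousAt)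

lemma hcs_rpow_mul {f : ℝ → ℝ} (hf2 : HasCompactSupport f) (c : ℝ) :
    HasCompactSupport fun s : ℝ => s ^ c * f s := by
  apply hf2.mono
  intro s hs
  simp only [Function.mem_support] at hs ⊢
  exact fun h => hs (by simp [h])

lemma cont_div {f : ℝ → ℝ} (hf1 : Continuous f) (hf2 : HasCompactSupport f)
    (hf3 : tsupport f ⊆ Ioi 0) : Continuous fun s : ℝ => f s / s := by
  have : (fun s : ℝ => f s / s) = fun s : ℝ => s ^ (-1 : ℝ) * f s := by
    funext s
    rw [Real.rpow_neg_one, div_eq_mul_inv, mul_comm]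
  rw [this]
  exact cont_rpow_mul hf1 hf2 hf3 _

lemma hcs_div {f : ℝ → ℝ} (hf2 : HasCompactSupport f) : HasCompactSupport fun s : ℝ => f s / s := by
  apply hf2.mono
  intro s hs
  simp only [Function.mem_support] at hs ⊢
  exact fun h => hs (by simp [h])

lemma hasDerivAt_G {f : ℝ → ℝ} (hf1 : Continuous f) (hf2 : HasCompactSupport f)
    (hf3 : tsupport f ⊆ Ioi 0) (c : ℝ) {R : ℝ} (hR : 0 < R) :
    HasDerivAt (fun r => ∫ s in Ioc (0:ℝ) r, s ^ c * f s) (R ^ c * f R) R := by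
  set g : ℝ → ℝ := fun s => s ^ c * f s with hg
  have hgc : Continuous g := cont_rpow_mul hf1 hf2 hf3 c
  have hgi : Integrable g := hgc.integrable_of_hasCompactSupport (hcs_rpow_mul hf2 c)
  have h1 : HasDerivAt (fun r => ∫ s in (0:ℝ)..r, g s) (g R) R :=
    intervalIntegral.integral_hasDerivAt_right hgi.intervalIntegrable
      hgc.stronglyMeasurable.stronglyMeasurableAtFilter hgc.continuousAt
  apply h1.congr_of_eventuallyEq
  filter_upwards [Ioi_mem_nhds hR] with r hr
  rw [intervalIntegral.integral_of_le (le_of_lt hr)]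

lemma hasDerivAt_F {f : ℝ → ℝ} (hf1 : Continuous f) (hf2 : HasCompactSupport f)
    (hf3 : tsupport f ⊆ Ioi 0) {R : ℝ} (hR : 0 < R) :
    HasDerivAt (fun r => ∫ s in Ioi r, f s / s) (-(f R / R)) R := by
  set g : ℝ → ℝ := fun s => f s / s with hg
  have hgc : Continuous g := cont_div hf1 hf2 hf3
  have hgi : Integrable g := hgc.integrable_of_hasCompactSupport (hcs_div hf2)
  have h1 : HasDerivAt (fun r => (∫ s in Ioi (R/2), g s) - ∫ s in (R/2)..r, g s) (-(g R)) R :=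
    (intervalIntegral.integral_hasDerivAt_right hgi.intervalIntegrable
      hgc.stronglyMeasurable.stronglyMeasurableAtFilter hgc.continuousAt).const_sub _
  apply h1.congr_of_eventuallyEq
  filter_upwards [Ioi_mem_nhds (show R/2 < R by linarith)] with r hr
  have : Ioc (R/2) r ∪ Ioi r = Ioi (R/2) := Ioc_union_Ioi_eq_Ioi (le_of_lt hr)
  rw [intervalIntegral.integral_of_le (le_of_lt hr), eq_sub_iff_add_eq, add_comm, ← this,
    setIntegral_union _ measurableSet_Ioi hgi.integrableOn hgi.integrableOn]
  exact Ioc_disjoint_Ioi le_rfl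

lemma hasDerivAt_psiExp {α : ℝ} (hα : 0 < α) {f : ℝ → ℝ} (hf1 : Continuous f)
    (hf2 : HasCompactSupport f) (hf3 : tsupport f ⊆ Ioi 0) {R : ℝ} (hR : 0 < R) :
    HasDerivAt (psiExp α f)
      (-(1 / α ^ 2) * R ^ (-(4 / α) - 1) * ∫ s in Ioc (0:ℝ) R, s ^ (4 / α - 1) * f s) R := by
  have hF := (hasDerivAt_F hf1 hf2 hf3 hR).const_mul (1 / (4 * α))
  have hrpow : HasDerivAt (fun r : ℝ => r ^ (-(4/α))) ((-(4/α)) * R ^ (-(4/α) - 1)) R :=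
    Real.hasDerivAt_rpow_const (Or.inl (ne_of_gt hR))
  have hG := hasDerivAt_G hf1 hf2 hf3 (4/α - 1) hR
  have hprod := ((hrpow.const_mul (1 / (4 * α))).mul hG)
  have := hF.add hprod
  refine HasDerivAt.congr_deriv this ?_
  have hcancel : R ^ (-(4/α)) * R ^ (4/α - 1) = R⁻¹ := by
    rw [← Real.rpow_add hR, ← Real.rpow_neg_one]; ring_nf
  set I := ∫ s in Ioc (0:ℝ) R, s ^ (4/α - 1) * f s
  have hα' : α ≠ 0 := ne_of_gt hα
  have h2 : (1 / (4 * α) * R ^ (-(4/α))) * (R ^ (4/α - 1) * f R) = 1/(4*α) * (f R / R) := by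
    rw [div_eq_mul_inv (f R) R, ← hcancel]
    ring
  rw [h2]
  have hR' : R ≠ 0 := ne_of_gt hR
  field_simp
  ring

lemma deriv_psiExp {α : ℝ} (hα : 0 < α) {f : ℝ → ℝ} (hf1 : Continuous f)
    (hf2 : HasCompactSupport f) (hf3 : tsupport f ⊆ Ioi 0) {R : ℝ} (hR : 0 < R) :
    deriv (psiExp α f) R
      = -(1 / α ^ 2) * R ^ (-(4 / α) - 1) * ∫ s in Ioc (0:ℝ) R, s ^ (4 / α - 1) * f s :=
  (hasDerivAt_psiExp hα hf1 hf2 hf3 hR).deriv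

lemma deriv2_psiExp {α : ℝ} (hα : 0 < α) {f : ℝ → ℝ} (hf1 : Continuous f)
    (hf2 : HasCompactSupport f) (hf3 : tsupport f ⊆ Ioi 0) {R : ℝ} (hR : 0 < R) :
    R ^ 2 * deriv (deriv (psiExp α f)) R
      = (1 / α ^ 2) * ((4 / α + 1) * (R ^ (-(4 / α)) * ∫ s in Ioc (0:ℝ) R, s ^ (4 / α - 1) * f s)
          - f R) := by
  set φ : ℝ → ℝ := fun r => -(1 / α ^ 2) * r ^ (-(4/α) - 1) * ∫ s in Ioc (0:ℝ) r, s ^ (4/α - 1) * f s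
    with hφ
  have hev : deriv (psiExp α f) =ᶠ[nhds R] φ := by
    filter_upwards [Ioi_mem_nhds hR] with r hr
    exact deriv_psiExp hα hf1 hf2 hf3 hr
  rw [hev.deriv_eq]
  have hrpow : HasDerivAt (fun r : ℝ => r ^ (-(4/α) - 1)) ((-(4/α) - 1) * R ^ (-(4/α) - 1 - 1)) R :=
    Real.hasDerivAt_rpow_const (Or.inl (ne_of_gt hR))
  have hG := hasDerivAt_G hf1 hf2 hf3 (4/α - 1) hR
  have hd : HasDerivAt φ
      ((-(1 / α ^ 2) * ((-(4/α) - 1) * R ^ (-(4/α) - 1 - 1))) * (∫ s in Ioc (0:ℝ) R, s ^ (4/α - 1) * f s)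
        + (-(1 / α ^ 2) * R ^ (-(4/α) - 1)) * (R ^ (4/α - 1) * f R)) R :=
    (hrpow.const_mul (-(1 / α ^ 2))).mul hG
  rw [hd.deriv]
  have hmerge : ∀ x y : ℝ, R ^ x * R ^ y = R ^ (x + y) := fun x y => (Real.rpow_add hR x y).symm
  have h2 : (R:ℝ) ^ (2:ℕ) = R ^ ((2:ℕ):ℝ) := (Real.rpow_natCast R 2).symm
  set I := ∫ s in Ioc (0:ℝ) R, s ^ (4/α - 1) * f s
  have e1 : R ^ ((2:ℕ):ℝ) * R ^ (-(4/α) - 1 - 1) = R ^ (-(4/α)) := by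
    rw [hmerge]; congr 1; push_cast; ring
  have e2 : R ^ ((2:ℕ):ℝ) * (R ^ (-(4/α) - 1) * R ^ (4/α - 1)) = 1 := by
    rw [hmerge, hmerge, show ((2:ℕ):ℝ) + (-(4/α) - 1 + (4/α - 1)) = 0 by push_cast; ring]
    exact Real.rpow_zero R
  calc R ^ (2:ℕ) * (-(1 / α ^ 2) * ((-(4/α) - 1) * R ^ (-(4/α) - 1 - 1)) * I
        + -(1 / α ^ 2) * R ^ (-(4/α) - 1) * (R ^ (4/α - 1) * f R))
      = (1/α^2) * ((4/α + 1) * ((R ^ ((2:ℕ):ℝ) * R ^ (-(4/α) - 1 - 1)) * I))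
        - (1/α^2) * ((R ^ ((2:ℕ):ℝ) * (R ^ (-(4/α) - 1) * R ^ (4/α - 1))) * f R) := by
        rw [h2]; ring
    _ = (1 / α ^ 2) * ((4/α + 1) * (R ^ (-(4/α)) * I) - f R) := by rw [e1, e2]; ring

lemma hardy_swap {b : ℝ} (hb : 4 ≤ b) {f : ℝ → ℝ} (hf1 : Continuous f) :
    ∫⁻ R in Ioi (0:ℝ), ∫⁻ s in Ioc (0:ℝ) R,
        ENNReal.ofReal (R ^ (-b - 1/2) * (s ^ (b - 1/2) * f s ^ 2))
      = ENNReal.ofReal (1 / (b - 1/2)) * ∫⁻ s in Ioi (0:ℝ), ENNReal.ofReal (f s ^ 2) := by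
  have hK : (0:ℝ) < b - 1/2 := by linarith
  set Φ : ℝ → ℝ → ℝ≥0∞ := fun R s => ENNReal.ofReal (R ^ (-b - 1/2) * (s ^ (b - 1/2) * f s ^ 2))
    with hΦ
  set E : Set (ℝ × ℝ) := {p : ℝ × ℝ | 0 < p.2 ∧ p.2 ≤ p.1} with hE
  have hEmeas : MeasurableSet E :=
    (measurableSet_lt measurable_const measurable_snd).inter
      (measurableSet_le measurable_snd measurable_fst)
  set Ψ : ℝ → ℝ → ℝ≥0∞ := fun R s => E.indicator (fun q => Φ q.1 q.2) (R, s) with hΨ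
  have hΦmeas : Measurable fun q : ℝ × ℝ => Φ q.1 q.2 := by
    apply Measurable.ennreal_ofReal
    have hfm : Measurable f := hf1.measurable
    measurability
  have hΨmeas : Measurable fun q : ℝ × ℝ => Ψ q.1 q.2 := by
    have : (fun q : ℝ × ℝ => Ψ q.1 q.2) = E.indicator (fun q => Φ q.1 q.2) := by
      funext q; rfl
    rw [this]
    exact hΦmeas.indicator hEmeas
  have step1 : ∀ R : ℝ, (∫⁻ s in Ioc (0:ℝ) R, Φ R s) = ∫⁻ s, Ψ R s := by
    intro R
    rw [← lintegral_indicator measurableSet_Ioc]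
    exact lintegral_congr fun s => rfl
  calc ∫⁻ R in Ioi (0:ℝ), ∫⁻ s in Ioc (0:ℝ) R, Φ R s
      = ∫⁻ R in Ioi (0:ℝ), ∫⁻ s, Ψ R s := by
        exact lintegral_congr step1
    _ = ∫⁻ s, ∫⁻ R in Ioi (0:ℝ), Ψ R s := by
        exact lintegral_lintegral_swap hΨmeas.aemeasurable
    _ = ∫⁻ s, (Ioi (0:ℝ)).indicator (fun s => ENNReal.ofReal (1/(b - 1/2) * f s ^ 2)) s := by
        apply lintegral_congr
        intro s
        rcases le_or_gt s 0 with hs | hs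
        · rw [Set.indicator_of_notMem (by simpa using hs)]
          have : ∀ R : ℝ, Ψ R s = 0 := by
            intro R
            apply Set.indicator_of_notMem
            simp only [hE, mem_setOf_eq, not_and]
            intro h; exact absurd h (not_lt.mpr hs)
          simp [this]
        · rw [Set.indicator_of_mem (mem_Ioi.mpr hs)]
          have hΨeq : ∀ R : ℝ, Ψ R s = (Ici s).indicator (fun R => Φ R s) R := by
            intro R
            simp only [hΨ, Set.indicator_apply, hE, mem_setOf_eq, mem_Ici, hs, true_and]
          calc ∫⁻ R in Ioi (0:ℝ), Ψ R s
              = ∫⁻ R in Ioi (0:ℝ), (Ici s).indicator (fun R => Φ R s) R := by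
                exact lintegral_congr hΨeq
            _ = ∫⁻ R in Ici s ∩ Ioi (0:ℝ), Φ R s := by
                rw [lintegral_indicator measurableSet_Ici, Measure.restrict_restrict measurableSet_Ici]
            _ = ∫⁻ R in Ioi s, Φ R s := by
                have he : Ici s ∩ Ioi 0 = Ici s :=
                  inter_eq_self_of_subset_left fun x hx => lt_of_lt_of_le hs hx
                rw [he, Measure.restrict_congr_set Ioi_ae_eq_Ici.symm]
            _ = ∫⁻ R in Ioi s, ENNReal.ofReal (R ^ (-b - 1/2)) * ENNReal.ofReal (s ^ (b - 1/2) * f s ^ 2) := by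
                apply setLIntegral_congr_fun measurableSet_Ioi
                intro R hR
                dsimp only
                rw [hΦ, ← ENNReal.ofReal_mul (Real.rpow_nonneg (le_of_lt (hs.trans hR)) _)]
            _ = ENNReal.ofReal (s ^ (1/2 - b) / (b - 1/2)) * ENNReal.ofReal (s ^ (b - 1/2) * f s ^ 2) := by
                rw [lintegral_mul_const' _ _ ENNReal.ofReal_ne_top]
                congr 1
                rw [← ofReal_integral_eq_lintegral_ofReal]
                · congr 1
                  rw [integral_Ioi_rpow_of_lt (by linarith) hs,
                    show -b - 1/2 + 1 = 1/2 - b by ring,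
                    show (1:ℝ)/2 - b = -(b - 1/2) by ring, neg_div_neg_eq]
                · exact integrableOn_Ioi_rpow_of_lt (by linarith) hs
                · filter_upwards [ae_restrict_mem measurableSet_Ioi] with R hR
                  exact Real.rpow_nonneg (le_of_lt (hs.trans hR)) _
            _ = ENNReal.ofReal (1/(b - 1/2) * f s ^ 2) := by
                rw [← ENNReal.ofReal_mul (by positivity)]
                congr 1
                rw [show s ^ ((1:ℝ)/2 - b) / (b - 1/2) * (s ^ (b - 1/2) * f s ^ 2)
                    = (s ^ ((1:ℝ)/2 - b) * s ^ (b - 1/2)) * (1/(b - 1/2) * f s ^ 2) by ring,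
                  ← Real.rpow_add hs]
                norm_num
    _ = ∫⁻ s in Ioi (0:ℝ), ENNReal.ofReal (1/(b - 1/2) * f s ^ 2) := by
        rw [lintegral_indicator measurableSet_Ioi]
    _ = ENNReal.ofReal (1/(b - 1/2)) * ∫⁻ s in Ioi (0:ℝ), ENNReal.ofReal (f s ^ 2) := by
        rw [← lintegral_const_mul' _ _ ENNReal.ofReal_ne_top]
        apply lintegral_congr
        intro s
        rw [← ENNReal.ofReal_mul (by positivity)]

lemma hardy_pointwise {b : ℝ} (hb : 4 ≤ b) {f : ℝ → ℝ} (hf1 : Continuous f)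
    (hf2 : HasCompactSupport f) (hf3 : tsupport f ⊆ Ioi 0) {R : ℝ} (hR : 0 < R) :
    ENNReal.ofReal ((R ^ (-b) * ∫ s in Ioc (0:ℝ) R, s ^ (b - 1) * f s) ^ 2)
      ≤ ENNReal.ofReal (1 / (b - 1/2)) *
        ∫⁻ s in Ioc (0:ℝ) R, ENNReal.ofReal (R ^ (-b - 1/2) * (s ^ (b - 1/2) * f s ^ 2)) := by
  have hK : (0:ℝ) < b - 1/2 := by linarith
  set g : ℝ → ℝ := fun s => s ^ (b - 1) * f s with hg
  have hgi : Integrable g :=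
    (cont_rpow_mul hf1 hf2 hf3 (b-1)).integrable_of_hasCompactSupport (hcs_rpow_mul hf2 (b-1))
  set u : ℝ → ℝ≥0∞ := fun s => ENNReal.ofReal (s ^ (b/2 - 3/4)) with hu
  set v : ℝ → ℝ≥0∞ := fun s => ENNReal.ofReal (s ^ (b/2 - 1/4) * |f s|) with hv
  set B : ℝ≥0∞ := ∫⁻ s in Ioc (0:ℝ) R, ENNReal.ofReal (s ^ (b - 1/2) * f s ^ 2) with hB
  -- step 1 : |∫ g| through lintegral
  have h1 : ENNReal.ofReal ((∫ s in Ioc (0:ℝ) R, g s) ^ 2)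
      ≤ (∫⁻ s in Ioc (0:ℝ) R, (u * v) s) ^ 2 := by
    have habs : |∫ s in Ioc (0:ℝ) R, g s| ≤ ∫ s in Ioc (0:ℝ) R, |g s| := by
      simpa [Real.norm_eq_abs] using
        norm_integral_le_integral_norm (μ := volume.restrict (Ioc (0:ℝ) R)) g
    have heq : ENNReal.ofReal (∫ s in Ioc (0:ℝ) R, |g s|)
        = ∫⁻ s in Ioc (0:ℝ) R, ENNReal.ofReal |g s| :=
      ofReal_integral_eq_lintegral_ofReal hgi.abs.integrableOn
        (Filter.Eventually.of_forall fun s => abs_nonneg _)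
    have hcongr : (∫⁻ s in Ioc (0:ℝ) R, ENNReal.ofReal |g s|)
        = ∫⁻ s in Ioc (0:ℝ) R, (u * v) s := by
      apply setLIntegral_congr_fun measurableSet_Ioc
      intro s hs
      have hs0 : (0:ℝ) < s := hs.1
      simp only [hg, hu, hv, Pi.mul_apply]
      rw [abs_mul, abs_of_nonneg (Real.rpow_nonneg hs0.le _),
        show b - 1 = (b/2 - 3/4) + (b/2 - 1/4) by ring, Real.rpow_add hs0,
        mul_assoc, ENNReal.ofReal_mul (Real.rpow_nonneg hs0.le _)]
    calc ENNReal.ofReal ((∫ s in Ioc (0:ℝ) R, g s) ^ 2)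
        = (ENNReal.ofReal |∫ s in Ioc (0:ℝ) R, g s|) ^ 2 := by
          rw [← ENNReal.ofReal_pow (abs_nonneg _), sq_abs]
      _ ≤ (ENNReal.ofReal (∫ s in Ioc (0:ℝ) R, |g s|)) ^ 2 := by
          rw [pow_two, pow_two]
          exact mul_le_mul' (ENNReal.ofReal_le_ofReal habs) (ENNReal.ofReal_le_ofReal habs)
      _ = (∫⁻ s in Ioc (0:ℝ) R, (u * v) s) ^ 2 := by rw [heq, hcongr]
  -- step 2 : Cauchy-Schwarz
  have hcs : (∫⁻ s in Ioc (0:ℝ) R, (u * v) s)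
      ≤ (∫⁻ s in Ioc (0:ℝ) R, u s ^ (2:ℝ)) ^ (1/(2:ℝ))
        * (∫⁻ s in Ioc (0:ℝ) R, v s ^ (2:ℝ)) ^ (1/(2:ℝ)) := by
    have hfm : Measurable f := hf1.measurable
    refine ENNReal.lintegral_mul_le_Lp_mul_Lq _ ⟨by norm_num, by norm_num, by norm_num⟩ ?_ ?_
    · apply Measurable.aemeasurable; apply Measurable.ennreal_ofReal; measurability
    · apply Measurable.aemeasurable; apply Measurable.ennreal_ofReal; measurability
  -- step 3 : compute the u-integral
  have hA : (∫⁻ s in Ioc (0:ℝ) R, u s ^ (2:ℝ))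
      = ENNReal.ofReal (R ^ (b - 1/2) / (b - 1/2)) := by
    have hcongr : (∫⁻ s in Ioc (0:ℝ) R, u s ^ (2:ℝ))
        = ∫⁻ s in Ioc (0:ℝ) R, ENNReal.ofReal (s ^ (b - 3/2)) := by
      apply setLIntegral_congr_fun measurableSet_Ioc
      intro s hs
      dsimp only
      have hs0 : (0:ℝ) < s := hs.1
      rw [hu, ENNReal.ofReal_rpow_of_nonneg (Real.rpow_nonneg hs0.le _) (by norm_num),
        ← Real.rpow_mul hs0.le, show (b/2 - 3/4) * 2 = b - 3/2 by ring]
    rw [hcongr, ← ofReal_integral_eq_lintegral_ofReal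
        ((intervalIntegral.intervalIntegrable_rpow' (by linarith : (-1:ℝ) < b - 3/2)).1)
        ?_]
    · congr 1
      rw [← intervalIntegral.integral_of_le hR.le,
        integral_rpow (Or.inl (by linarith : (-1:ℝ) < b - 3/2)),
        show b - 3/2 + 1 = b - 1/2 by ring, Real.zero_rpow (ne_of_gt hK), sub_zero]
    · filter_upwards [ae_restrict_mem measurableSet_Ioc] with s hs
      exact Real.rpow_nonneg hs.1.le _
  -- step 4 : the v-integral
  have hBeq : (∫⁻ s in Ioc (0:ℝ) R, v s ^ (2:ℝ)) = B := by
    apply setLIntegral_congr_fun measurableSet_Ioc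
    intro s hs
    dsimp only
    have hs0 : (0:ℝ) < s := hs.1
    rw [hv, ENNReal.ofReal_rpow_of_nonneg (by positivity) (by norm_num),
      Real.mul_rpow (Real.rpow_nonneg hs0.le _) (abs_nonneg _),
      ← Real.rpow_mul hs0.le, show (b/2 - 1/4) * 2 = b - 1/2 by ring,
      show ((2:ℝ)) = ((2:ℕ):ℝ) by norm_num, Real.rpow_natCast, sq_abs]
  -- assemble
  have hsq : ((∫⁻ s in Ioc (0:ℝ) R, u s ^ (2:ℝ)) ^ (1/(2:ℝ))
        * (∫⁻ s in Ioc (0:ℝ) R, v s ^ (2:ℝ)) ^ (1/(2:ℝ))) ^ 2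
      = ENNReal.ofReal (R ^ (b - 1/2) / (b - 1/2)) * B := by
    rw [mul_pow, hA, hBeq, ← ENNReal.rpow_natCast (_ ^ (1/(2:ℝ))) 2,
      ← ENNReal.rpow_natCast (B ^ (1/(2:ℝ))) 2, ← ENNReal.rpow_mul, ← ENNReal.rpow_mul]
    norm_num
  have main : ENNReal.ofReal ((∫ s in Ioc (0:ℝ) R, g s) ^ 2)
      ≤ ENNReal.ofReal (R ^ (b - 1/2) / (b - 1/2)) * B := by
    refine h1.trans ?_
    rw [← hsq, pow_two, pow_two]
    exact mul_le_mul' hcs hcs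
  -- final algebra
  have hRHS : ENNReal.ofReal (1 / (b - 1/2)) *
        (∫⁻ s in Ioc (0:ℝ) R, ENNReal.ofReal (R ^ (-b - 1/2) * (s ^ (b - 1/2) * f s ^ 2)))
      = ENNReal.ofReal (1 / (b - 1/2)) * (ENNReal.ofReal (R ^ (-b - 1/2)) * B) := by
    congr 1
    rw [hB, ← lintegral_const_mul' _ _ ENNReal.ofReal_ne_top]
    apply lintegral_congr
    intro s
    rw [← ENNReal.ofReal_mul (Real.rpow_nonneg hR.le _)]
  rw [hRHS, mul_pow, ENNReal.ofReal_mul (sq_nonneg _)]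
  calc ENNReal.ofReal ((R ^ (-b)) ^ 2) * ENNReal.ofReal ((∫ s in Ioc (0:ℝ) R, g s) ^ 2)
      ≤ ENNReal.ofReal ((R ^ (-b)) ^ 2) *
        (ENNReal.ofReal (R ^ (b - 1/2) / (b - 1/2)) * B) := mul_le_mul_right main _
    _ = ENNReal.ofReal (1 / (b - 1/2)) * (ENNReal.ofReal (R ^ (-b - 1/2)) * B) := by
        rw [← mul_assoc, ← ENNReal.ofReal_mul (sq_nonneg _), ← mul_assoc,
          ← ENNReal.ofReal_mul (by positivity)]
        congr 2
        rw [← Real.rpow_natCast (R ^ (-b)) 2, ← Real.rpow_mul hR.le,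
          show R ^ (-b * ((2:ℕ):ℝ)) * (R ^ (b - 1/2) / (b - 1/2))
            = (R ^ (-b * ((2:ℕ):ℝ)) * R ^ (b - 1/2)) * (1/(b - 1/2)) by ring,
          ← Real.rpow_add hR, show -b * ((2:ℕ):ℝ) + (b - 1/2) = -b - 1/2 by push_cast; ring]
        ring

lemma G_continuous {f : ℝ → ℝ} (hf1 : Continuous f) (hf2 : HasCompactSupport f)
    (hf3 : tsupport f ⊆ Ioi 0) (c : ℝ) :
    Continuous fun R => ∫ s in Ioc (0:ℝ) R, s ^ c * f s := by
  obtain ⟨ε, hε, h0⟩ := exists_eps hf2 hf3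
  have hgi : Integrable (fun s : ℝ => s ^ c * f s) :=
    (cont_rpow_mul hf1 hf2 hf3 c).integrable_of_hasCompactSupport (hcs_rpow_mul hf2 c)
  have heq : (fun R => ∫ s in Ioc (0:ℝ) R, s ^ c * f s)
      = fun R => ∫ s in (0:ℝ)..R, s ^ c * f s := by
    funext R
    rcases le_or_gt 0 R with h | h
    · rw [intervalIntegral.integral_of_le h]
    · rw [intervalIntegral.integral_of_ge h.le, Ioc_eq_empty (not_lt.mpr h.le)]
      rw [Measure.restrict_empty, integral_zero_measure, eq_comm, neg_eq_zero]
      apply setIntegral_eq_zero_of_forall_eq_zero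
      intro x hx
      rw [h0 x (lt_of_le_of_lt hx.2 hε), mul_zero]
  rw [heq]
  exact intervalIntegral.continuous_primitive (fun a b => hgi.intervalIntegrable) 0

lemma f_sq_integrable {f : ℝ → ℝ} (hf1 : Continuous f) (hf2 : HasCompactSupport f) :
    Integrable (fun s => f s ^ 2) := by
  apply (hf1.pow 2).integrable_of_hasCompactSupport
  apply hf2.mono
  intro s hs
  simp only [Function.mem_support] at hs ⊢
  exact fun h => hs (by simp [h])

lemma hardy_lintegral {b : ℝ} (hb : 4 ≤ b) {f : ℝ → ℝ} (hf1 : Continuous f)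
    (hf2 : HasCompactSupport f) (hf3 : tsupport f ⊆ Ioi 0) :
    ∫⁻ R in Ioi (0:ℝ), ENNReal.ofReal ((R ^ (-b) * ∫ s in Ioc (0:ℝ) R, s ^ (b - 1) * f s) ^ 2)
      ≤ ENNReal.ofReal (1 / (b - 1/2)) * (ENNReal.ofReal (1 / (b - 1/2))
          * ∫⁻ s in Ioi (0:ℝ), ENNReal.ofReal (f s ^ 2)) := by
  calc ∫⁻ R in Ioi (0:ℝ), ENNReal.ofReal ((R ^ (-b) * ∫ s in Ioc (0:ℝ) R, s ^ (b - 1) * f s) ^ 2)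
      ≤ ∫⁻ R in Ioi (0:ℝ), ENNReal.ofReal (1 / (b - 1/2)) *
          ∫⁻ s in Ioc (0:ℝ) R, ENNReal.ofReal (R ^ (-b - 1/2) * (s ^ (b - 1/2) * f s ^ 2)) := by
        refine lintegral_mono_ae ?_
        filter_upwards [ae_restrict_mem measurableSet_Ioi] with R hR
        exact hardy_pointwise hb hf1 hf2 hf3 hR
    _ = ENNReal.ofReal (1 / (b - 1/2)) * ∫⁻ R in Ioi (0:ℝ),
          ∫⁻ s in Ioc (0:ℝ) R, ENNReal.ofReal (R ^ (-b - 1/2) * (s ^ (b - 1/2) * f s ^ 2)) :=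
        lintegral_const_mul' _ _ ENNReal.ofReal_ne_top
    _ = ENNReal.ofReal (1 / (b - 1/2)) * (ENNReal.ofReal (1 / (b - 1/2))
          * ∫⁻ s in Ioi (0:ℝ), ENNReal.ofReal (f s ^ 2)) := by
        rw [hardy_swap hb hf1]

lemma hardy_real {b : ℝ} (hb : 4 ≤ b) {f : ℝ → ℝ} (hf1 : Continuous f)
    (hf2 : HasCompactSupport f) (hf3 : tsupport f ⊆ Ioi 0) :
    ∫ R in Ioi (0:ℝ), (R ^ (-b) * ∫ s in Ioc (0:ℝ) R, s ^ (b - 1) * f s) ^ 2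
      ≤ (1 / (b - 1/2))^2 * ∫ s in Ioi (0:ℝ), f s ^ 2 := by
  have hK : (0:ℝ) < b - 1/2 := by linarith
  have hfm : Measurable f := hf1.measurable
  have hLf_eq : ∫ s in Ioi (0:ℝ), f s ^ 2
      = (∫⁻ s in Ioi (0:ℝ), ENNReal.ofReal (f s ^ 2)).toReal :=
    integral_eq_lintegral_of_nonneg_ae (Filter.Eventually.of_forall fun s => sq_nonneg _)
      (hf1.pow 2).aestronglyMeasurable.restrict
  have hLf_fin : (∫⁻ s in Ioi (0:ℝ), ENNReal.ofReal (f s ^ 2)) ≠ ⊤ :=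
    ne_of_lt ((f_sq_integrable hf1 hf2).restrict.lintegral_lt_top)
  have hHmeas : Measurable fun R : ℝ => (R ^ (-b) * ∫ s in Ioc (0:ℝ) R, s ^ (b - 1) * f s) ^ 2 := by
    have hGm : Measurable fun R => ∫ s in Ioc (0:ℝ) R, s ^ (b - 1) * f s :=
      (G_continuous hf1 hf2 hf3 (b - 1)).measurable
    measurability
  rw [integral_eq_lintegral_of_nonneg_ae (Filter.Eventually.of_forall fun R => sq_nonneg _)
      hHmeas.aestronglyMeasurable.restrict, hLf_eq]
  have := hardy_lintegral hb hf1 hf2 hf3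
  have hfin : ENNReal.ofReal (1 / (b - 1/2)) * (ENNReal.ofReal (1 / (b - 1/2))
      * ∫⁻ s in Ioi (0:ℝ), ENNReal.ofReal (f s ^ 2)) ≠ ⊤ :=
    ENNReal.mul_ne_top ENNReal.ofReal_ne_top (ENNReal.mul_ne_top ENNReal.ofReal_ne_top hLf_fin)
  calc (∫⁻ R in Ioi (0:ℝ), ENNReal.ofReal ((R ^ (-b) * ∫ s in Ioc (0:ℝ) R, s ^ (b-1) * f s) ^ 2)).toReal
      ≤ (ENNReal.ofReal (1 / (b - 1/2)) * (ENNReal.ofReal (1 / (b - 1/2))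
          * ∫⁻ s in Ioi (0:ℝ), ENNReal.ofReal (f s ^ 2))).toReal := ENNReal.toReal_mono hfin this
    _ = (1 / (b - 1/2))^2 * (∫⁻ s in Ioi (0:ℝ), ENNReal.ofReal (f s ^ 2)).toReal := by
        rw [ENNReal.toReal_mul, ENNReal.toReal_mul, ENNReal.toReal_ofReal (by positivity)]
        ring

lemma W_estimate {b : ℝ} (hb : 4 ≤ b) {f : ℝ → ℝ} (hf1 : Continuous f)
    (hf2 : HasCompactSupport f) (hf3 : tsupport f ⊆ Ioi 0) :
    ∫ R in Ioi (0:ℝ), ((b+1) * (R ^ (-b) * ∫ s in Ioc (0:ℝ) R, s ^ (b - 1) * f s) - f R) ^ 2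
      ≤ 7 * ∫ s in Ioi (0:ℝ), f s ^ 2 := by
  have hK : (0:ℝ) < b - 1/2 := by linarith
  have hfm : Measurable f := hf1.measurable
  have hGm : Measurable fun R => ∫ s in Ioc (0:ℝ) R, s ^ (b - 1) * f s :=
    (G_continuous hf1 hf2 hf3 (b - 1)).measurable
  have hrm : Measurable fun R : ℝ => R ^ (-b) := by measurability
  set H : ℝ → ℝ := fun R => R ^ (-b) * ∫ s in Ioc (0:ℝ) R, s ^ (b - 1) * f s with hH
  have hHm : Measurable H := hrm.mul hGm
  set Lf : ℝ≥0∞ := ∫⁻ s in Ioi (0:ℝ), ENNReal.ofReal (f s ^ 2) with hLf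
  have hLf_eq : ∫ s in Ioi (0:ℝ), f s ^ 2 = Lf.toReal :=
    integral_eq_lintegral_of_nonneg_ae (Filter.Eventually.of_forall fun s => sq_nonneg _)
      (hf1.pow 2).aestronglyMeasurable.restrict
  have hLf_fin : Lf ≠ ⊤ := ne_of_lt ((f_sq_integrable hf1 hf2).restrict.lintegral_lt_top)
  have hW_eq : ∫ R in Ioi (0:ℝ), ((b+1) * H R - f R) ^ 2
      = (∫⁻ R in Ioi (0:ℝ), ENNReal.ofReal (((b+1) * H R - f R) ^ 2)).toReal := by
    apply integral_eq_lintegral_of_nonneg_ae (Filter.Eventually.of_forall fun s => sq_nonneg _)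
    exact (((measurable_const.mul hHm).sub hfm).pow_const 2).aestronglyMeasurable.restrict
  have hchain : (∫⁻ R in Ioi (0:ℝ), ENNReal.ofReal (((b+1) * H R - f R) ^ 2))
      ≤ ENNReal.ofReal 7 * Lf := by
    calc ∫⁻ R in Ioi (0:ℝ), ENNReal.ofReal (((b+1) * H R - f R) ^ 2)
        ≤ ∫⁻ R in Ioi (0:ℝ),
            (ENNReal.ofReal (2*(b+1)^2 * H R ^ 2) + ENNReal.ofReal (2 * f R ^ 2)) := by
          apply lintegral_mono
          intro R
          dsimp only
          rw [← ENNReal.ofReal_add (by positivity) (by positivity)]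
          apply ENNReal.ofReal_le_ofReal
          nlinarith [sq_nonneg ((b+1) * H R + f R), sq_nonneg ((b+1) * H R - f R)]
      _ = (∫⁻ R in Ioi (0:ℝ), ENNReal.ofReal (2*(b+1)^2 * H R ^ 2))
          + ∫⁻ R in Ioi (0:ℝ), ENNReal.ofReal (2 * f R ^ 2) := by
          exact lintegral_add_left
            ((measurable_const.mul (hHm.pow_const 2)).ennreal_ofReal) _
      _ = ENNReal.ofReal (2*(b+1)^2) * (∫⁻ R in Ioi (0:ℝ), ENNReal.ofReal (H R ^ 2))
          + ENNReal.ofReal 2 * Lf := by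
          congr 1
          · rw [← lintegral_const_mul' _ _ ENNReal.ofReal_ne_top]
            apply lintegral_congr
            intro R
            rw [← ENNReal.ofReal_mul (by positivity)]
          · rw [hLf, ← lintegral_const_mul' _ _ ENNReal.ofReal_ne_top]
            apply lintegral_congr
            intro R
            rw [← ENNReal.ofReal_mul (by norm_num)]
      _ ≤ ENNReal.ofReal (2*(b+1)^2) * (ENNReal.ofReal (1/(b-1/2)) * (ENNReal.ofReal (1/(b-1/2))
            * Lf)) + ENNReal.ofReal 2 * Lf := by
          gcongr
          exact hardy_lintegral hb hf1 hf2 hf3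
      _ = (ENNReal.ofReal (2*(b+1)^2 * (1/(b-1/2)) * (1/(b-1/2))) + ENNReal.ofReal 2) * Lf := by
          have hco : ENNReal.ofReal (2*(b+1)^2 * (1/(b-1/2)) * (1/(b-1/2)))
              = ENNReal.ofReal (2*(b+1)^2)
                * (ENNReal.ofReal (1/(b-1/2)) * ENNReal.ofReal (1/(b-1/2))) := by
            rw [← ENNReal.ofReal_mul (by positivity), ← ENNReal.ofReal_mul (by positivity)]
            congr 1
            ring
          rw [add_mul, hco]
          ring
      _ ≤ ENNReal.ofReal 7 * Lf := by
          apply mul_le_mul_left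
          rw [← ENNReal.ofReal_add (by positivity) (by norm_num)]
          apply ENNReal.ofReal_le_ofReal
          have h7 : 2*(b+1)^2 * (1/(b-1/2)) * (1/(b-1/2)) ≤ 5 := by
            have h5 : 2*(b+1)^2 ≤ 5*(b-1/2)^2 := by nlinarith
            calc 2*(b+1)^2 * (1/(b-1/2)) * (1/(b-1/2))
                ≤ 5*(b-1/2)^2 * (1/(b-1/2)) * (1/(b-1/2)) := by
                  have hp : (0:ℝ) ≤ 1/(b-1/2) := by positivity
                  exact mul_le_mul_of_nonneg_right (mul_le_mul_of_nonneg_right h5 hp) hp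
              _ = 5 := by
                  have hb2 : b - 1/2 ≠ 0 := ne_of_gt hK
                  rw [show 5*(b-1/2)^2 * (1/(b-1/2)) * (1/(b-1/2))
                      = 5 * ((b-1/2) * (1/(b-1/2))) * ((b-1/2) * (1/(b-1/2))) by ring,
                    mul_one_div_cancel hb2]
                  norm_num
          linarith
  rw [hW_eq, hLf_eq]
  calc (∫⁻ R in Ioi (0:ℝ), ENNReal.ofReal (((b+1) * H R - f R) ^ 2)).toReal
      ≤ (ENNReal.ofReal 7 * Lf).toReal := ENNReal.toReal_mono
        (ENNReal.mul_ne_top ENNReal.ofReal_ne_top hLf_fin) hchain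
    _ = 7 * Lf.toReal := by
        rw [ENNReal.toReal_mul, ENNReal.toReal_ofReal (by norm_num)]

/-- **Key cancellation and elliptic estimates for the singular part of the stream
function:** (i) `ψ'(R) = −(1/α²) R^{−4/α−1} ∫₀^R s^{4/α−1} f(s) ds`, and
(ii) `α‖Rψ'‖_{L²} ≤ C‖f‖_{L²}` and `α²‖R²ψ''‖_{L²} ≤ C‖f‖_{L²}`. -/
theorem key_cancellation_and_elliptic_estimates :
    ∃ C : ℝ, 0 < C ∧
      ∀ α : ℝ, 0 < α → α ≤ 1 →
        ∀ f : ℝ → ℝ, Continuous f → HasCompactSupport f → tsupport f ⊆ Ioi 0 →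
          (∀ R : ℝ, 0 < R →
            deriv (psiExp α f) R
              = -(1 / α ^ 2) * R ^ (-(4 / α) - 1) * ∫ s in Ioc (0:ℝ) R, s ^ (4 / α - 1) * f s) ∧
          α * Real.sqrt (∫ R in Ioi (0:ℝ), (R * deriv (psiExp α f) R) ^ 2)
            ≤ C * Real.sqrt (∫ s in Ioi (0:ℝ), f s ^ 2) ∧
          α ^ 2 * Real.sqrt (∫ R in Ioi (0:ℝ), (R ^ 2 * deriv (deriv (psiExp α f)) R) ^ 2)
            ≤ C * Real.sqrt (∫ s in Ioi (0:ℝ), f s ^ 2) := by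
  refine ⟨3, by norm_num, fun α hα hα1 f hf1 hf2 hf3 => ?_⟩
  have hb : (4:ℝ) ≤ 4 / α := by
    rw [le_div_iff₀ hα]; linarith
  have hKα : (0:ℝ) < 4 / α - 1/2 := by linarith
  set J := ∫ s in Ioi (0:ℝ), f s ^ 2 with hJ
  have hJ0 : 0 ≤ J := integral_nonneg fun s => sq_nonneg _
  have hsJ : 0 ≤ Real.sqrt J := Real.sqrt_nonneg _
  refine ⟨fun R hR => deriv_psiExp hα hf1 hf2 hf3 hR, ?_, ?_⟩
  · -- first estimate
    set X := ∫ R in Ioi (0:ℝ), (R ^ (-(4/α)) * ∫ s in Ioc (0:ℝ) R, s ^ (4/α - 1) * f s) ^ 2 with hX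
    have hX0 : 0 ≤ X := integral_nonneg fun s => sq_nonneg _
    have key1 : (∫ R in Ioi (0:ℝ), (R * deriv (psiExp α f) R) ^ 2) = (1/α^2)^2 * X := by
      rw [hX, ← integral_const_mul]
      apply setIntegral_congr_fun measurableSet_Ioi
      intro R hR
      have hR' : (0:ℝ) < R := hR
      dsimp only
      rw [deriv_psiExp hα hf1 hf2 hf3 hR']
      have h1 : R ^ ((1:ℝ)) * R ^ (-(4/α) - 1) = R ^ (-(4/α)) := by
        rw [← Real.rpow_add hR']; congr 1; ring
      rw [← h1, Real.rpow_one]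
      ring
    have hhardy : X ≤ (1/(4/α - 1/2))^2 * J := hardy_real hb hf1 hf2 hf3
    have hsqX : Real.sqrt X ≤ (1/(4/α - 1/2)) * Real.sqrt J := by
      calc Real.sqrt X ≤ Real.sqrt ((1/(4/α - 1/2))^2 * J) := Real.sqrt_le_sqrt hhardy
        _ = (1/(4/α - 1/2)) * Real.sqrt J := by
            rw [Real.sqrt_mul (sq_nonneg _), Real.sqrt_sq (by positivity)]
    rw [key1, Real.sqrt_mul (sq_nonneg _), Real.sqrt_sq (by positivity), ← mul_assoc]
    calc α * (1/α^2) * Real.sqrt X ≤ α * (1/α^2) * ((1/(4/α - 1/2)) * Real.sqrt J) :=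
          mul_le_mul_of_nonneg_left hsqX (by positivity)
      _ = (α * (1/α^2) * (1/(4/α - 1/2))) * Real.sqrt J := by ring
      _ ≤ 3 * Real.sqrt J := by
          apply mul_le_mul_of_nonneg_right _ hsJ
          have hαne : α ≠ 0 := ne_of_gt hα
          have e1 : α * (1/α^2) = 1/α := by
            rw [one_div, pow_two, mul_inv, ← mul_assoc, mul_inv_cancel₀ hαne, one_mul, one_div]
          have hc : α * (1/α^2) * (1/(4/α - 1/2)) = 1 / (4 - α/2) := by
            rw [e1, one_div_mul_one_div, show α * (4/α - 1/2) = 4 - α/2 by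
              field_simp]
          rw [hc, div_le_iff₀ (by linarith : (0:ℝ) < 4 - α/2)]
          linarith
  · -- second estimate
    set Y := ∫ R in Ioi (0:ℝ),
        ((4/α + 1) * (R ^ (-(4/α)) * ∫ s in Ioc (0:ℝ) R, s ^ (4/α - 1) * f s) - f R) ^ 2 with hY
    have hY0 : 0 ≤ Y := integral_nonneg fun s => sq_nonneg _
    have key2 : (∫ R in Ioi (0:ℝ), (R ^ 2 * deriv (deriv (psiExp α f)) R) ^ 2)
        = (1/α^2)^2 * Y := by
      rw [hY, ← integral_const_mul]
      apply setIntegral_congr_fun measurableSet_Ioi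
      intro R hR
      have hR' : (0:ℝ) < R := hR
      dsimp only
      rw [deriv2_psiExp hα hf1 hf2 hf3 hR']
      ring
    have hW : Y ≤ 7 * J := W_estimate hb hf1 hf2 hf3
    rw [key2, Real.sqrt_mul (sq_nonneg _), Real.sqrt_sq (by positivity), ← mul_assoc]
    have hcoef : α^2 * (1/α^2) = 1 := by field_simp
    rw [hcoef, one_mul]
    calc Real.sqrt Y ≤ Real.sqrt (7 * J) := Real.sqrt_le_sqrt hW
      _ = Real.sqrt 7 * Real.sqrt J := Real.sqrt_mul (by norm_num) _
      _ ≤ 3 * Real.sqrt J := by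
          apply mul_le_mul_of_nonneg_right _ hsJ
          rw [show (3:ℝ) = Real.sqrt 9 by
            rw [show (9:ℝ) = 3^2 by norm_num, Real.sqrt_sq (by norm_num)]]
          exact Real.sqrt_le_sqrt (by norm_num)
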